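/- Let G (the graph denoted (K_4)_e) be the graph on vertices {1,2,3,4,5} with edge set {13, 14, 15, 23, 24, 25, 45}. Then: (a) for all real numbers λ₁ < λ₂, there exists A ∈ S(G) with the Strong Spectral Property whose spectrum is the multiset {λ₁, λ₁, λ₁, λ₂, λ₂} (ordered multiplicity list (3,2)); and (b) for all real numbers λ₁ < λ₂ < λ₃, there exists A ∈ S(G) with the Strong Spectral Property whose spectrum is the multiset {λ₁, λ₁, λ₁, λ₂, λ₃} (ordered multiplicity list (3,1,1)). -/

import Mathlib

open Matrix

/-- The geometric multiplicity of `lam` as an eigenvalue of `A`: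
`dim ker (A - lam • I)`. -/
noncomputable def multOf {m : Type*} [Fintype m] [DecidableEq m]
    (A : Matrix m m ℝ) (lam : ℝ) : ℕ :=
  Module.finrank ℝ (LinearMap.ker (A - lam • (1 : Matrix m m ℝ)).mulVecLin)

/-- The Strong Spectral Property. -/
def HasSSP {m : Type*} [Fintype m] [DecidableEq m] (A : Matrix m m ℝ) : Prop :=
  ∀ X : Matrix m m ℝ, X.IsSymm → Matrix.hadamard A X = 0 →
    Matrix.hadamard (1 : Matrix m m ℝ) X = 0 → A * X - X * A = 0 → X = 0

/-- `A ∈ S(G)`: `A` is symmetric and its off-diagonal nonzero pattern is given by `G`. -/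
def InS {m : Type*} [Fintype m] [DecidableEq m]
    (G : SimpleGraph m) (A : Matrix m m ℝ) : Prop :=
  A.IsSymm ∧ ∀ i j, i ≠ j → (A i j ≠ 0 ↔ G.Adj i j)


/-- The graph `(K₄)ₑ` on vertices `{0,1,2,3,4}` with edges
`{02, 03, 04, 12, 13, 14, 34}`. -/
def k4e : SimpleGraph (Fin 5) :=
  SimpleGraph.fromRel fun i j =>
    (i.val, j.val) ∈ [(0,2), (0,3), (0,4), (1,2), (1,3), (1,4), (3,4)]

section Aux

set_option linter.unreachableTactic false
set_option linter.unusedTactic false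

lemma multOf_diag5 (d : Fin 5 → ℝ) (lam : ℝ) :
    multOf (Matrix.diagonal d) lam =
      5 - ((if d 0 = lam then 0 else 1) + (if d 1 = lam then 0 else 1) +
           (if d 2 = lam then 0 else 1) + (if d 3 = lam then 0 else 1) +
           (if d 4 = lam then 0 else 1)) := by
  have hM : Matrix.diagonal d - lam • (1 : Matrix (Fin 5) (Fin 5) ℝ)
      = Matrix.diagonal (fun i => d i - lam) := by
    ext i j
    by_cases h : i = j <;>
      simp [Matrix.diagonal_apply, h, Matrix.one_apply, Matrix.sub_apply, Matrix.smul_apply]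
  have hrank : (Matrix.diagonal d - lam • (1 : Matrix (Fin 5) (Fin 5) ℝ)).rank
      = Fintype.card {i : Fin 5 // d i - lam ≠ 0} := by
    rw [hM]; exact Matrix.rank_diagonal _
  have hcard : Fintype.card {i : Fin 5 // d i - lam ≠ 0}
      = ((if d 0 = lam then 0 else 1) + (if d 1 = lam then 0 else 1) +
         (if d 2 = lam then 0 else 1) + (if d 3 = lam then 0 else 1) +
         (if d 4 = lam then 0 else 1)) := by
    have h : ∀ x : ℝ, (if x - lam ≠ 0 then (1:ℕ) else 0) = (if x = lam then 0 else 1) := by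
      intro x
      by_cases h : x = lam <;> simp [h, sub_ne_zero]
    rw [Fintype.card_subtype, Finset.card_filter, Fin.sum_univ_five, h, h, h, h, h]
  have hrn := LinearMap.finrank_range_add_finrank_ker
      ((Matrix.diagonal d - lam • (1 : Matrix (Fin 5) (Fin 5) ℝ)).mulVecLin)
  rw [Module.finrank_fin_fun] at hrn
  have e1 : Module.finrank ℝ (LinearMap.range
      ((Matrix.diagonal d - lam • (1 : Matrix (Fin 5) (Fin 5) ℝ)).mulVecLin))
      = (Matrix.diagonal d - lam • (1 : Matrix (Fin 5) (Fin 5) ℝ)).rank := rfl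
  unfold multOf
  rw [e1, hrank, hcard] at hrn
  omega

lemma multOf_conj (P Q A D : Matrix (Fin 5) (Fin 5) ℝ) (hPQ : P * Q = 1) (hQP : Q * P = 1)
    (hA : A = P * D * Q) (lam : ℝ) : multOf A lam = multOf D lam := by
  have hP : IsUnit P.det := by
    rw [← Matrix.isUnit_iff_isUnit_det]; exact ⟨⟨P, Q, hPQ, hQP⟩, rfl⟩
  have hQ : IsUnit Q.det := by
    rw [← Matrix.isUnit_iff_isUnit_det]; exact ⟨⟨Q, P, hQP, hPQ⟩, rfl⟩
  have key : A - lam • (1 : Matrix (Fin 5) (Fin 5) ℝ)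
      = P * (D - lam • (1 : Matrix (Fin 5) (Fin 5) ℝ)) * Q := by
    rw [hA, Matrix.mul_sub, Matrix.sub_mul, Matrix.mul_smul, Matrix.mul_one,
      Matrix.smul_mul, hPQ]
  have h1 := LinearMap.finrank_range_add_finrank_ker
      ((P * (D - lam • (1 : Matrix (Fin 5) (Fin 5) ℝ)) * Q).mulVecLin)
  have h2 := LinearMap.finrank_range_add_finrank_ker
      ((D - lam • (1 : Matrix (Fin 5) (Fin 5) ℝ)).mulVecLin)
  rw [Module.finrank_fin_fun] at h1 h2
  have hrk : (P * (D - lam • (1 : Matrix (Fin 5) (Fin 5) ℝ)) * Q).rank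
      = (D - lam • (1 : Matrix (Fin 5) (Fin 5) ℝ)).rank := by
    rw [Matrix.rank_mul_eq_left_of_isUnit_det Q
          (P * (D - lam • (1 : Matrix (Fin 5) (Fin 5) ℝ))) hQ,
        Matrix.rank_mul_eq_right_of_isUnit_det P
          (D - lam • (1 : Matrix (Fin 5) (Fin 5) ℝ)) hP]
  have e1 : Module.finrank ℝ (LinearMap.range
      ((P * (D - lam • (1 : Matrix (Fin 5) (Fin 5) ℝ)) * Q).mulVecLin))
      = (P * (D - lam • (1 : Matrix (Fin 5) (Fin 5) ℝ)) * Q).rank := rfl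
  have e2 : Module.finrank ℝ (LinearMap.range
      ((D - lam • (1 : Matrix (Fin 5) (Fin 5) ℝ)).mulVecLin))
      = (D - lam • (1 : Matrix (Fin 5) (Fin 5) ℝ)).rank := rfl
  unfold multOf
  rw [key]
  rw [e1, hrk] at h1
  rw [e2] at h2
  omega

noncomputable def amat (l1 a b s : ℝ) : Matrix (Fin 5) (Fin 5) ℝ :=
  !![l1 + a/2, 0, 3*a/10, 6*s/25, 8*s/25;
     0, l1 + a/2, -(2*a/5), 9*s/50, 6*s/25;
     3*a/10, -(2*a/5), l1 + a/2, 0, 0;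
     6*s/25, 9*s/50, 0, l1 + 9*(2*b-a)/50, 6*(2*b-a)/25;
     8*s/25, 6*s/25, 0, 6*(2*b-a)/25, l1 + 8*(2*b-a)/25]

noncomputable def pmat (a s : ℝ) : Matrix (Fin 5) (Fin 5) ℝ :=
  !![3, 4*a, 0, 4*s, 3;
     -4, 3*a, 0, 3*s, -4;
     5, 0, 0, 0, -5;
     0, 3*s, 4, -(3*a), 0;
     0, 4*s, -3, -(4*a), 0]

noncomputable def qmat' (a b s : ℝ) : Matrix (Fin 5) (Fin 5) ℝ :=
  !![3*a*b, -(4*a*b), 5*a*b, 0, 0;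
     4*a, 3*a, 0, 3*s, 4*s;
     0, 0, 0, 8*a*b, -(6*a*b);
     4*s, 3*s, 0, -(3*a), -(4*a);
     3*a*b, -(4*a*b), -(5*a*b), 0, 0]

lemma hAP_lemma (l1 a b s : ℝ) (hs : s^2 = 2*a*b - a^2) :
    amat l1 a b s * pmat a s
      = pmat a s * Matrix.diagonal ![l1+a, l1+b, l1, l1, l1] := by
  ext i j
  fin_cases i <;> fin_cases j <;>
    simp [amat, pmat, Matrix.mul_apply, Fin.sum_univ_five, Matrix.diagonal_apply] <;>
    (try simp only [Matrix.vecHead, Matrix.vecTail, Function.comp]) <;>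
    first
      | ring1
      | (rw [hs]; ring1)
      | (ring_nf; rw [hs]; ring1)
      | (ring_nf; rw [hs]; ring_nf)

lemma hPQ'_lemma (a b s : ℝ) (hs : s^2 = 2*a*b - a^2) :
    pmat a s * qmat' a b s = (50*a*b) • (1 : Matrix (Fin 5) (Fin 5) ℝ) := by
  ext i j
  fin_cases i <;> fin_cases j <;>
    simp [pmat, qmat', Matrix.mul_apply, Fin.sum_univ_five, Matrix.one_apply,
      Matrix.smul_apply] <;>
    (try simp only [Matrix.vecHead, Matrix.vecTail, Function.comp]) <;>
    first
      | ring1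
      | (rw [hs]; ring1)
      | (ring_nf; rw [hs]; ring1)
      | (ring_nf; rw [hs]; ring_nf)

lemma k4e_adj (i j : Fin 5) :
    k4e.Adj i j ↔ i ≠ j ∧
      (((i.val, j.val) ∈ [(0,2), (0,3), (0,4), (1,2), (1,3), (1,4), (3,4)]) ∨
       ((j.val, i.val) ∈ [(0,2), (0,3), (0,4), (1,2), (1,3), (1,4), (3,4)])) :=
  SimpleGraph.fromRel_adj _ i j

lemma key_lemma (l1 a b s : ℝ) (ha : 0 < a) (hb : 0 < b) (hba : 0 < 2*b - a)
    (hs : s^2 = 2*a*b - a^2) (hs0 : 0 < s) :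
    InS k4e (amat l1 a b s) ∧ HasSSP (amat l1 a b s) ∧
      ∀ lam : ℝ, multOf (amat l1 a b s) lam
        = multOf (Matrix.diagonal ![l1+a, l1+b, l1, l1, l1]) lam := by
  have h50 : (50*a*b : ℝ) ≠ 0 :=
    mul_ne_zero (mul_ne_zero (by norm_num) (ne_of_gt ha)) (ne_of_gt hb)
  have hPQ : pmat a s * ((50*a*b)⁻¹ • qmat' a b s) = 1 := by
    rw [Matrix.mul_smul, hPQ'_lemma a b s hs, smul_smul, inv_mul_cancel₀ h50, one_smul]
  have hQP : ((50*a*b)⁻¹ • qmat' a b s) * pmat a s = 1 := mul_eq_one_comm.mp hPQ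
  have hA : amat l1 a b s
      = pmat a s * Matrix.diagonal ![l1+a, l1+b, l1, l1, l1] * ((50*a*b)⁻¹ • qmat' a b s) := by
    calc amat l1 a b s = amat l1 a b s * 1 := (Matrix.mul_one _).symm
    _ = amat l1 a b s * (pmat a s * ((50*a*b)⁻¹ • qmat' a b s)) := by rw [hPQ]
    _ = (amat l1 a b s * pmat a s) * ((50*a*b)⁻¹ • qmat' a b s) := by
        rw [Matrix.mul_assoc]
    _ = pmat a s * Matrix.diagonal ![l1+a, l1+b, l1, l1, l1] * ((50*a*b)⁻¹ • qmat' a b s) := by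
        rw [hAP_lemma l1 a b s hs]
  refine ⟨⟨?_, ?_⟩, ?_, fun lam => multOf_conj _ _ _ _ hPQ hQP hA lam⟩
  · -- symmetry
    show (amat l1 a b s)ᵀ = amat l1 a b s
    ext i j
    fin_cases i <;> fin_cases j <;>
      simp [amat, Matrix.transpose_apply] <;>
      (try simp only [Matrix.vecHead, Matrix.vecTail, Function.comp])
  · -- pattern
    intro i j hij
    fin_cases i <;> fin_cases j
    · exact absurd rfl hij
    · exact iff_of_false (fun h => h rfl)
        (fun h => absurd ((k4e_adj _ _).mp h) (by decide))
    · exact iff_of_true (fun h => by have h' : (3*a/10 : ℝ) = 0 := h; linarith)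
        ((k4e_adj _ _).mpr (by decide))
    · exact iff_of_true (fun h => by have h' : (6*s/25 : ℝ) = 0 := h; linarith)
        ((k4e_adj _ _).mpr (by decide))
    · exact iff_of_true (fun h => by have h' : (8*s/25 : ℝ) = 0 := h; linarith)
        ((k4e_adj _ _).mpr (by decide))
    · exact iff_of_false (fun h => h rfl)
        (fun h => absurd ((k4e_adj _ _).mp h) (by decide))
    · exact absurd rfl hij
    · exact iff_of_true (fun h => by have h' : (-(2*a/5) : ℝ) = 0 := h; linarith)
        ((k4e_adj _ _).mpr (by decide))
    · exact iff_of_true (fun h => by have h' : (9*s/50 : ℝ) = 0 := h; linarith)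
        ((k4e_adj _ _).mpr (by decide))
    · exact iff_of_true (fun h => by have h' : (6*s/25 : ℝ) = 0 := h; linarith)
        ((k4e_adj _ _).mpr (by decide))
    · exact iff_of_true (fun h => by have h' : (3*a/10 : ℝ) = 0 := h; linarith)
        ((k4e_adj _ _).mpr (by decide))
    · exact iff_of_true (fun h => by have h' : (-(2*a/5) : ℝ) = 0 := h; linarith)
        ((k4e_adj _ _).mpr (by decide))
    · exact absurd rfl hij
    · exact iff_of_false (fun h => h rfl)
        (fun h => absurd ((k4e_adj _ _).mp h) (by decide))
    · exact iff_of_false (fun h => h rfl)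
        (fun h => absurd ((k4e_adj _ _).mp h) (by decide))
    · exact iff_of_true (fun h => by have h' : (6*s/25 : ℝ) = 0 := h; linarith)
        ((k4e_adj _ _).mpr (by decide))
    · exact iff_of_true (fun h => by have h' : (9*s/50 : ℝ) = 0 := h; linarith)
        ((k4e_adj _ _).mpr (by decide))
    · exact iff_of_false (fun h => h rfl)
        (fun h => absurd ((k4e_adj _ _).mp h) (by decide))
    · exact absurd rfl hij
    · exact iff_of_true (fun h => by have h' : (6*(2*b-a)/25 : ℝ) = 0 := h; linarith)
        ((k4e_adj _ _).mpr (by decide))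
    · exact iff_of_true (fun h => by have h' : (8*s/25 : ℝ) = 0 := h; linarith)
        ((k4e_adj _ _).mpr (by decide))
    · exact iff_of_true (fun h => by have h' : (6*s/25 : ℝ) = 0 := h; linarith)
        ((k4e_adj _ _).mpr (by decide))
    · exact iff_of_false (fun h => h rfl)
        (fun h => absurd ((k4e_adj _ _).mp h) (by decide))
    · exact iff_of_true (fun h => by have h' : (6*(2*b-a)/25 : ℝ) = 0 := h; linarith)
        ((k4e_adj _ _).mpr (by decide))
    · exact absurd rfl hij
  · -- SSP
    intro X hX h1 h2 h3
    have d0 : X 0 0 = 0 := by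
      have h := congrFun (congrFun h2 0) 0
      rw [Matrix.hadamard_apply, Matrix.zero_apply] at h
      simpa [Matrix.one_apply] using h
    have d1 : X 1 1 = 0 := by
      have h := congrFun (congrFun h2 1) 1
      rw [Matrix.hadamard_apply, Matrix.zero_apply] at h
      simpa [Matrix.one_apply] using h
    have d2 : X 2 2 = 0 := by
      have h := congrFun (congrFun h2 2) 2
      rw [Matrix.hadamard_apply, Matrix.zero_apply] at h
      simpa [Matrix.one_apply] using h
    have d3 : X 3 3 = 0 := by
      have h := congrFun (congrFun h2 3) 3
      rw [Matrix.hadamard_apply, Matrix.zero_apply] at h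
      simpa [Matrix.one_apply] using h
    have d4 : X 4 4 = 0 := by
      have h := congrFun (congrFun h2 4) 4
      rw [Matrix.hadamard_apply, Matrix.zero_apply] at h
      simpa [Matrix.one_apply] using h
    have e02 : X 0 2 = 0 := by
      have h := congrFun (congrFun h1 0) 2
      rw [Matrix.hadamard_apply, Matrix.zero_apply] at h
      have h' : (3*a/10 : ℝ) * X 0 2 = 0 := h
      rcases mul_eq_zero.mp h' with h'' | h''
      · exfalso; linarith
      · exact h''
    have e03 : X 0 3 = 0 := by
      have h := congrFun (congrFun h1 0) 3
      rw [Matrix.hadamard_apply, Matrix.zero_apply] at h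
      have h' : (6*s/25 : ℝ) * X 0 3 = 0 := h
      rcases mul_eq_zero.mp h' with h'' | h''
      · exfalso; linarith
      · exact h''
    have e04 : X 0 4 = 0 := by
      have h := congrFun (congrFun h1 0) 4
      rw [Matrix.hadamard_apply, Matrix.zero_apply] at h
      have h' : (8*s/25 : ℝ) * X 0 4 = 0 := h
      rcases mul_eq_zero.mp h' with h'' | h''
      · exfalso; linarith
      · exact h''
    have e12 : X 1 2 = 0 := by
      have h := congrFun (congrFun h1 1) 2
      rw [Matrix.hadamard_apply, Matrix.zero_apply] at h
      have h' : (-(2*a/5) : ℝ) * X 1 2 = 0 := h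
      rcases mul_eq_zero.mp h' with h'' | h''
      · exfalso; linarith
      · exact h''
    have e13 : X 1 3 = 0 := by
      have h := congrFun (congrFun h1 1) 3
      rw [Matrix.hadamard_apply, Matrix.zero_apply] at h
      have h' : (9*s/50 : ℝ) * X 1 3 = 0 := h
      rcases mul_eq_zero.mp h' with h'' | h''
      · exfalso; linarith
      · exact h''
    have e14 : X 1 4 = 0 := by
      have h := congrFun (congrFun h1 1) 4
      rw [Matrix.hadamard_apply, Matrix.zero_apply] at h
      have h' : (6*s/25 : ℝ) * X 1 4 = 0 := h
      rcases mul_eq_zero.mp h' with h'' | h''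
      · exfalso; linarith
      · exact h''
    have e20 : X 2 0 = 0 := by
      have h := congrFun (congrFun h1 2) 0
      rw [Matrix.hadamard_apply, Matrix.zero_apply] at h
      have h' : (3*a/10 : ℝ) * X 2 0 = 0 := h
      rcases mul_eq_zero.mp h' with h'' | h''
      · exfalso; linarith
      · exact h''
    have e21 : X 2 1 = 0 := by
      have h := congrFun (congrFun h1 2) 1
      rw [Matrix.hadamard_apply, Matrix.zero_apply] at h
      have h' : (-(2*a/5) : ℝ) * X 2 1 = 0 := h
      rcases mul_eq_zero.mp h' with h'' | h''
      · exfalso; linarith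
      · exact h''
    have e30 : X 3 0 = 0 := by
      have h := congrFun (congrFun h1 3) 0
      rw [Matrix.hadamard_apply, Matrix.zero_apply] at h
      have h' : (6*s/25 : ℝ) * X 3 0 = 0 := h
      rcases mul_eq_zero.mp h' with h'' | h''
      · exfalso; linarith
      · exact h''
    have e31 : X 3 1 = 0 := by
      have h := congrFun (congrFun h1 3) 1
      rw [Matrix.hadamard_apply, Matrix.zero_apply] at h
      have h' : (9*s/50 : ℝ) * X 3 1 = 0 := h
      rcases mul_eq_zero.mp h' with h'' | h''
      · exfalso; linarith
      · exact h''
    have e34 : X 3 4 = 0 := by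
      have h := congrFun (congrFun h1 3) 4
      rw [Matrix.hadamard_apply, Matrix.zero_apply] at h
      have h' : (6*(2*b-a)/25 : ℝ) * X 3 4 = 0 := h
      rcases mul_eq_zero.mp h' with h'' | h''
      · exfalso; linarith
      · exact h''
    have e40 : X 4 0 = 0 := by
      have h := congrFun (congrFun h1 4) 0
      rw [Matrix.hadamard_apply, Matrix.zero_apply] at h
      have h' : (8*s/25 : ℝ) * X 4 0 = 0 := h
      rcases mul_eq_zero.mp h' with h'' | h''
      · exfalso; linarith
      · exact h''
    have e41 : X 4 1 = 0 := by
      have h := congrFun (congrFun h1 4) 1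
      rw [Matrix.hadamard_apply, Matrix.zero_apply] at h
      have h' : (6*s/25 : ℝ) * X 4 1 = 0 := h
      rcases mul_eq_zero.mp h' with h'' | h''
      · exfalso; linarith
      · exact h''
    have e43 : X 4 3 = 0 := by
      have h := congrFun (congrFun h1 4) 3
      rw [Matrix.hadamard_apply, Matrix.zero_apply] at h
      have h' : (6*(2*b-a)/25 : ℝ) * X 4 3 = 0 := h
      rcases mul_eq_zero.mp h' with h'' | h''
      · exfalso; linarith
      · exact h''
    have s10 : X 1 0 = X 0 1 := hX.apply 0 1
    have s32 : X 3 2 = X 2 3 := hX.apply 2 3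
    have s42 : X 4 2 = X 2 4 := hX.apply 2 4
    have c03 := congrFun (congrFun h3 0) 3
    have c13 := congrFun (congrFun h3 1) 3
    have c04 := congrFun (congrFun h3 0) 4
    simp only [Matrix.sub_apply, Matrix.mul_apply, Fin.sum_univ_five, Matrix.zero_apply,
      amat, Matrix.cons_val', Matrix.cons_val_zero, Matrix.cons_val_one, Matrix.head_cons,
      Matrix.empty_val', Matrix.cons_val_fin_one, Matrix.cons_val_two, Matrix.tail_cons,
      Matrix.cons_val_three, Matrix.cons_val_four, Matrix.head_fin_const, Matrix.of_apply,
      Matrix.cons_val_succ, Matrix.vecHead, Matrix.vecTail, Function.comp,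
      s10, s32, s42, d0, d1, d2, d3, d4, e02, e03, e04, e12, e13, e14, e20, e21, e30,
      e31, e34, e40, e41, e43,
      mul_zero, zero_mul, add_zero, zero_add, sub_zero, zero_sub, neg_eq_zero] at c03 c13 c04
    have hsx : s * X 0 1 = 0 := by linear_combination (-25/9 : ℝ) * c03 - (25/12 : ℝ) * c13
    have hx : X 0 1 = 0 := by
      rcases mul_eq_zero.mp hsx with h | h
      · exact absurd h (ne_of_gt hs0)
      · exact h
    have hay : a * X 2 3 = 0 := by linear_combination (10/3 : ℝ) * c03 + (3*s/5 : ℝ) * hx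
    have hy : X 2 3 = 0 := by
      rcases mul_eq_zero.mp hay with h | h
      · exact absurd h (ne_of_gt ha)
      · exact h
    have haz : a * X 2 4 = 0 := by linear_combination (10/3 : ℝ) * c04 + (4*s/5 : ℝ) * hx
    have hz : X 2 4 = 0 := by
      rcases mul_eq_zero.mp haz with h | h
      · exact absurd h (ne_of_gt ha)
      · exact h
    have hx' : X 1 0 = 0 := s10.trans hx
    have hy' : X 3 2 = 0 := s32.trans hy
    have hz' : X 4 2 = 0 := s42.trans hz
    ext i j
    fin_cases i <;> fin_cases j <;>
      simp only [Matrix.zero_apply] <;>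
      first
        | exact d0 | exact d1 | exact d2 | exact d3 | exact d4
        | exact e02 | exact e03 | exact e04 | exact e12 | exact e13 | exact e14
        | exact e20 | exact e21 | exact e30 | exact e31 | exact e34
        | exact e40 | exact e41 | exact e43
        | exact hx | exact hy | exact hz | exact hx' | exact hy' | exact hz'

end Aux

/-- `(K₄)ₑ` realizes the ordered multiplicity lists `(3,2)` and `(3,1,1)`
spectrally arbitrarily with the SSP. -/
theorem k4e_oml32_and_oml311_spectrally_arbitrary_SSP :
    (∀ l1 l2 : ℝ, l1 < l2 →
      ∃ A : Matrix (Fin 5) (Fin 5) ℝ, InS k4e A ∧ HasSSP A ∧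
        multOf A l1 = 3 ∧ multOf A l2 = 2 ∧
        ∀ t, t ≠ l1 → t ≠ l2 → multOf A t = 0) ∧
    (∀ l1 l2 l3 : ℝ, l1 < l2 → l2 < l3 →
      ∃ A : Matrix (Fin 5) (Fin 5) ℝ, InS k4e A ∧ HasSSP A ∧
        multOf A l1 = 3 ∧ multOf A l2 = 1 ∧ multOf A l3 = 1 ∧
        ∀ t, t ≠ l1 → t ≠ l2 → t ≠ l3 → multOf A t = 0) := by
  constructor
  · intro l1 l2 hlt
    have ha : (0:ℝ) < l2 - l1 := by linarith
    obtain ⟨hInS, hSSP, hmult⟩ := key_lemma l1 (l2-l1) (l2-l1) (l2-l1)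
      ha ha (by linarith) (by ring) ha
    refine ⟨amat l1 (l2-l1) (l2-l1) (l2-l1), hInS, hSSP, ?_, ?_, ?_⟩
    · rw [hmult l1, multOf_diag5]
      simp only [Matrix.cons_val_zero, Matrix.cons_val_one, Matrix.head_cons,
        Matrix.cons_val_two, Matrix.tail_cons, Matrix.cons_val_three, Matrix.cons_val_four,
        Matrix.head_fin_const]
      simp only [(show ¬(l1 + (l2 - l1) = l1) by intro h; linarith), ↓reduceIte]
      try norm_num
    · rw [hmult l2, multOf_diag5]
      simp only [Matrix.cons_val_zero, Matrix.cons_val_one, Matrix.head_cons,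
        Matrix.cons_val_two, Matrix.tail_cons, Matrix.cons_val_three, Matrix.cons_val_four,
        Matrix.head_fin_const]
      simp only [eq_true (show l1 + (l2 - l1) = l2 by ring),
        (show ¬(l1 = l2) by intro h; linarith), ↓reduceIte]
      try norm_num
    · intro t ht1 ht2
      rw [hmult t, multOf_diag5]
      simp only [Matrix.cons_val_zero, Matrix.cons_val_one, Matrix.head_cons,
        Matrix.cons_val_two, Matrix.tail_cons, Matrix.cons_val_three, Matrix.cons_val_four,
        Matrix.head_fin_const]
      simp only [(show ¬(l1 + (l2 - l1) = t) by intro h; exact ht2 (by linarith)),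
        (show ¬(l1 = t) by intro h; exact ht1 h.symm), ↓reduceIte]
      try norm_num
  · intro l1 l2 l3 h12 h23
    have ha : (0:ℝ) < l2 - l1 := by linarith
    have hb : (0:ℝ) < l3 - l1 := by linarith
    have hba : (0:ℝ) < 2*(l3-l1) - (l2-l1) := by linarith
    have harg : (0:ℝ) < 2*(l2-l1)*(l3-l1) - (l2-l1)^2 := by nlinarith
    have hs : (Real.sqrt (2*(l2-l1)*(l3-l1) - (l2-l1)^2))^2
        = 2*(l2-l1)*(l3-l1) - (l2-l1)^2 := Real.sq_sqrt (le_of_lt harg)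
    have hs0 : 0 < Real.sqrt (2*(l2-l1)*(l3-l1) - (l2-l1)^2) := Real.sqrt_pos.mpr harg
    obtain ⟨hInS, hSSP, hmult⟩ := key_lemma l1 (l2-l1) (l3-l1)
      (Real.sqrt (2*(l2-l1)*(l3-l1) - (l2-l1)^2)) ha hb hba hs hs0
    refine ⟨amat l1 (l2-l1) (l3-l1) (Real.sqrt (2*(l2-l1)*(l3-l1) - (l2-l1)^2)),
      hInS, hSSP, ?_, ?_, ?_, ?_⟩
    · rw [hmult l1, multOf_diag5]
      simp only [Matrix.cons_val_zero, Matrix.cons_val_one, Matrix.head_cons,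
        Matrix.cons_val_two, Matrix.tail_cons, Matrix.cons_val_three, Matrix.cons_val_four,
        Matrix.head_fin_const]
      simp only [(show ¬(l1 + (l2 - l1) = l1) by intro h; linarith),
        (show ¬(l1 + (l3 - l1) = l1) by intro h; linarith), ↓reduceIte]
      try norm_num
    · rw [hmult l2, multOf_diag5]
      simp only [Matrix.cons_val_zero, Matrix.cons_val_one, Matrix.head_cons,
        Matrix.cons_val_two, Matrix.tail_cons, Matrix.cons_val_three, Matrix.cons_val_four,
        Matrix.head_fin_const]
      simp only [eq_true (show l1 + (l2 - l1) = l2 by ring),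
        (show ¬(l1 + (l3 - l1) = l2) by intro h; linarith),
        (show ¬(l1 = l2) by intro h; linarith), ↓reduceIte]
      try norm_num
    · rw [hmult l3, multOf_diag5]
      simp only [Matrix.cons_val_zero, Matrix.cons_val_one, Matrix.head_cons,
        Matrix.cons_val_two, Matrix.tail_cons, Matrix.cons_val_three, Matrix.cons_val_four,
        Matrix.head_fin_const]
      simp only [(show ¬(l1 + (l2 - l1) = l3) by intro h; linarith),
        eq_true (show l1 + (l3 - l1) = l3 by ring),
        (show ¬(l1 = l3) by intro h; linarith), ↓reduceIte]
      try norm_num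
    · intro t ht1 ht2 ht3
      rw [hmult t, multOf_diag5]
      simp only [Matrix.cons_val_zero, Matrix.cons_val_one, Matrix.head_cons,
        Matrix.cons_val_two, Matrix.tail_cons, Matrix.cons_val_three, Matrix.cons_val_four,
        Matrix.head_fin_const]
      simp only [(show ¬(l1 + (l2 - l1) = t) by intro h; exact ht2 (by linarith)),
        (show ¬(l1 + (l3 - l1) = t) by intro h; exact ht3 (by linarith)),
        (show ¬(l1 = t) by intro h; exact ht1 h.symm), ↓reduceIte]
      try norm_num
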